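/- If every finitely generated subgroup of a group G given by a presentation ⟨A ∥ R⟩ is finitely presentable, then the presentation ⟨A ∥ R⟩ is weakly finite. -/

import Mathlib

open Subgroup

/-- The natural quotient map `F(A) → ⟨A ∥ R⟩` of a presentation. -/
def presMk {α : Type} (R : Set (FreeGroup α)) :
    FreeGroup α →* FreeGroup α ⧸ Subgroup.normalClosure R :=
  QuotientGroup.mk' (Subgroup.normalClosure R)

/-- A presentation `⟨A ∥ R⟩` is weakly finite if for every finite set `S` of words in
`A^{±1}` there are a finite subalphabet `A₀ ⊆ A` and a finite set `R₀` of relators from `R`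
written in `A₀^{±1}`, such that every word of `S` is an `A₀`-word and the natural
homomorphism `⟨A₀ ∥ R₀⟩ → ⟨A ∥ R⟩` restricts to an isomorphism (i.e. is injective) on the
subgroup generated by the images of the words of `S`. -/
def IsWeaklyFinite {α : Type} (R : Set (FreeGroup α)) : Prop :=
  ∀ S : Finset (FreeGroup α),
    ∃ (A₀ : Finset α) (R₀ S₀ : Finset (FreeGroup {a : α // a ∈ A₀})),
      (FreeGroup.map (Subtype.val) '' (R₀ : Set (FreeGroup {a : α // a ∈ A₀})) ⊆ R) ∧
      (FreeGroup.map (Subtype.val) '' (S₀ : Set (FreeGroup {a : α // a ∈ A₀}))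
         = (S : Set (FreeGroup α))) ∧
      ∃ h : (FreeGroup {a : α // a ∈ A₀} ⧸
              Subgroup.normalClosure (R₀ : Set (FreeGroup {a : α // a ∈ A₀}))) →*
            (FreeGroup α ⧸ Subgroup.normalClosure R),
        (∀ w : FreeGroup {a : α // a ∈ A₀},
           h (presMk (R₀ : Set (FreeGroup {a : α // a ∈ A₀})) w)
             = presMk R (FreeGroup.map Subtype.val w)) ∧
        Set.InjOn h
          (closure (presMk (R₀ : Set (FreeGroup {a : α // a ∈ A₀})) ''
            (S₀ : Set (FreeGroup {a : α // a ∈ A₀}))) : Set _)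

/-- A group is finitely presentable if it is isomorphic to a group given by a finite
presentation. -/
def FinitelyPresentable (H : Type) [Group H] : Prop :=
  ∃ (n : ℕ) (rels : Set (FreeGroup (Fin n))), rels.Finite ∧
    Nonempty (H ≃* FreeGroup (Fin n) ⧸ Subgroup.normalClosure rels)

theorem freeGroup_map_injective {β γ : Type*} {f : β → γ} (hf : Function.Injective f) :
    Function.Injective (FreeGroup.map f) := by
  rcases isEmpty_or_nonempty β with h | h
  · intro x y _
    have key : ∀ z : FreeGroup β, z = 1 := by
      intro z
      induction z using FreeGroup.induction_on with
      | C1 => rfl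
      | of a => exact isEmptyElim a
      | inv_of a _ => exact isEmptyElim a
      | mul a b ha hb => rw [ha, hb, one_mul]
    rw [key x, key y]
  · obtain ⟨g, hg⟩ := hf.hasLeftInverse
    intro x y hxy
    have h2 := congrArg (FreeGroup.map g) hxy
    rwa [FreeGroup.map.comp, FreeGroup.map.comp,
      show g ∘ f = id from funext hg, FreeGroup.map.id, FreeGroup.map.id] at h2

noncomputable def FreeGroup.supp {α : Type} (w : FreeGroup α) : Finset α := by
  classical exact (w.toWord.map Prod.fst).toFinset

theorem mem_range_map_val_of_supp_subset {α : Type} {A₀ : Finset α} {w : FreeGroup α}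
    (h : FreeGroup.supp w ⊆ A₀) :
    w ∈ (FreeGroup.map (Subtype.val : {a : α // a ∈ A₀} → α)).range := by
  classical
  have hL : ∀ p ∈ w.toWord, p.1 ∈ A₀ := by
    intro p hp
    apply h
    simp only [FreeGroup.supp, List.mem_toFinset]
    exact List.mem_map_of_mem hp
  refine ⟨FreeGroup.mk (w.toWord.pmap
      (fun (p : α × Bool) (hp : p.1 ∈ A₀) => ((⟨p.1, hp⟩ : {a : α // a ∈ A₀}), p.2)) hL), ?_⟩
  rw [FreeGroup.map.mk]
  conv_rhs => rw [← FreeGroup.mk_toWord (x := w)]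
  congr 1
  rw [List.map_pmap]
  simp

theorem ker_eq_normalClosure_of_fp {ι : Type} [Finite ι] {n : ℕ}
    {rels : Set (FreeGroup (Fin n))} (hrels : rels.Finite)
    (ψ : FreeGroup ι →* FreeGroup (Fin n) ⧸ Subgroup.normalClosure rels)
    (hsurj : Function.Surjective ψ) :
    ∃ T : Set (FreeGroup ι), T.Finite ∧ ψ.ker = Subgroup.normalClosure T := by
  classical
  set q : FreeGroup (Fin n) →* FreeGroup (Fin n) ⧸ Subgroup.normalClosure rels :=
    QuotientGroup.mk' (Subgroup.normalClosure rels) with hqdef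
  have hq : Function.Surjective q := QuotientGroup.mk'_surjective _
  choose w hw using fun i : ι => hq (ψ (FreeGroup.of i))
  choose v hv using fun j : Fin n => hsurj (q (FreeGroup.of j))
  set f : FreeGroup ι →* FreeGroup (Fin n) := FreeGroup.lift w with hfdef
  set g : FreeGroup (Fin n) →* FreeGroup ι := FreeGroup.lift v with hgdef
  have hqf : ∀ x, q (f x) = ψ x := by
    have : q.comp f = ψ :=
      FreeGroup.ext_hom _ _ (fun i => by
        simp [hfdef, FreeGroup.lift_apply_of, hw])
    intro x; rw [← this]; rfl
  have hψg : ∀ x, ψ (g x) = q x := by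
    have : ψ.comp g = q :=
      FreeGroup.ext_hom _ _ (fun j => by
        simp [hgdef, FreeGroup.lift_apply_of, hv])
    intro x; rw [← this]; rfl
  set T : Set (FreeGroup ι) :=
    g '' rels ∪ Set.range (fun i : ι => (FreeGroup.of i)⁻¹ * g (f (FreeGroup.of i))) with hTdef
  refine ⟨T, (hrels.image g).union (Set.finite_range _), ?_⟩
  apply le_antisymm
  · -- ker ψ ≤ normalClosure T
    intro x hx
    have key : ∀ y : FreeGroup ι, y⁻¹ * g (f y) ∈ Subgroup.normalClosure T := by
      intro y
      induction y using FreeGroup.induction_on with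
      | C1 => simpa using (Subgroup.normalClosure T).one_mem
      | of a =>
        exact Subgroup.subset_normalClosure (Or.inr ⟨a, rfl⟩)
      | inv_of a ih =>
        show (FreeGroup.of a)⁻¹⁻¹ * g (f (FreeGroup.of a)⁻¹) ∈ Subgroup.normalClosure T
        replace ih : (FreeGroup.of a)⁻¹ * g (f (FreeGroup.of a)) ∈ Subgroup.normalClosure T := ih
        have h1 := Subgroup.normalClosure_normal.conj_mem _
          ((Subgroup.normalClosure T).inv_mem ih) (FreeGroup.of a)
        have h2 : FreeGroup.of a * ((FreeGroup.of a)⁻¹ * g (f (FreeGroup.of a)))⁻¹ *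
            (FreeGroup.of a)⁻¹ =
            ((FreeGroup.of a)⁻¹)⁻¹ * g (f (FreeGroup.of a)⁻¹) := by
          simp only [map_inv]
          group
        rwa [h2] at h1
      | mul a b iha ihb =>
        have h1 := Subgroup.normalClosure_normal.conj_mem _ iha b⁻¹
        have h2 := (Subgroup.normalClosure T).mul_mem h1 ihb
        have h3 : b⁻¹ * (a⁻¹ * g (f a)) * b⁻¹⁻¹ * (b⁻¹ * g (f b)) =
            (a * b)⁻¹ * g (f (a * b)) := by
          simp only [map_mul]
          group
        rwa [h3] at h2
    have hfx : f x ∈ Subgroup.normalClosure rels := by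
      have h1 : q (f x) = 1 := by rw [hqf]; exact hx
      rwa [← QuotientGroup.ker_mk' (Subgroup.normalClosure rels), MonoidHom.mem_ker]
    have hgfx : g (f x) ∈ Subgroup.normalClosure T := by
      haveI : ((Subgroup.normalClosure T).comap g).Normal :=
        Subgroup.Normal.comap Subgroup.normalClosure_normal g
      have hle : Subgroup.normalClosure rels ≤ (Subgroup.normalClosure T).comap g := by
        apply Subgroup.normalClosure_le_normal
        intro r hr
        exact Subgroup.subset_normalClosure (Or.inl ⟨r, hr, rfl⟩)
      exact hle hfx
    have : x = g (f x) * (x⁻¹ * g (f x))⁻¹ := by group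
    rw [this]
    exact (Subgroup.normalClosure T).mul_mem hgfx
      ((Subgroup.normalClosure T).inv_mem (key x))
  · -- normalClosure T ≤ ker ψ
    apply Subgroup.normalClosure_le_normal
    rintro y (⟨r, hr, rfl⟩ | ⟨i, rfl⟩)
    · have : ψ (g r) = 1 := by
        rw [hψg]
        exact (QuotientGroup.eq_one_iff r).2 (Subgroup.subset_normalClosure hr)
      exact this
    · simp only [SetLike.mem_coe, MonoidHom.mem_ker, map_mul, map_inv]
      rw [hψg, hqf]
      simp

/-- If every finitely generated subgroup of `G = ⟨A ∥ R⟩` is finitely presentable, then the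
presentation `⟨A ∥ R⟩` is weakly finite. -/
theorem weaklyFinite_of_locallyFinitelyPresented {α : Type} (R : Set (FreeGroup α))
    (h : ∀ H : Subgroup (FreeGroup α ⧸ Subgroup.normalClosure R), H.FG → FinitelyPresentable H) :
    IsWeaklyFinite R := by
  classical
  intro S
  set π : FreeGroup α →* FreeGroup α ⧸ Subgroup.normalClosure R := presMk R with hπdef
  set H : Subgroup (FreeGroup α ⧸ Subgroup.normalClosure R) :=
    Subgroup.closure (π '' ↑S) with hHdef
  have hHfg : H.FG := ⟨S.image π, by rw [Finset.coe_image]⟩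
  obtain ⟨n, rels, hrels, ⟨θ⟩⟩ := h H hHfg
  set ι := {x : FreeGroup α // x ∈ S} with hιdef
  set e : FreeGroup ι →* FreeGroup α := FreeGroup.lift Subtype.val with hedef
  have hgen : ∀ s : ι, π (s : FreeGroup α) ∈ H := fun s =>
    Subgroup.subset_closure ⟨s.1, s.2, rfl⟩
  set π' : FreeGroup ι →* H := FreeGroup.lift (fun s => (⟨π s.1, hgen s⟩ : H)) with hπ'def
  have hπ'e : ∀ x, ((π' x : H) : FreeGroup α ⧸ Subgroup.normalClosure R) = π (e x) := by
    have heq : H.subtype.comp π' = π.comp e :=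
      FreeGroup.ext_hom _ _ (fun s => by
        simp [hπ'def, hedef, FreeGroup.lift_apply_of])
    intro x
    exact DFunLike.congr_fun heq x
  have hπ'surj : Function.Surjective π' := by
    have hmem : ∀ g0 (hg0 : g0 ∈ H), (⟨g0, hg0⟩ : H) ∈ π'.range := by
      intro g0 hg0
      refine Subgroup.closure_induction (p := fun g hg => (⟨g, hg⟩ : H) ∈ π'.range)
        ?_ ?_ ?_ ?_ hg0
      · rintro x ⟨s, hs, rfl⟩
        exact ⟨FreeGroup.of (⟨s, hs⟩ : ι), Subtype.ext (by simp [hπ'def, FreeGroup.lift_apply_of])⟩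
      · exact one_mem _
      · intro x y hx hy px py
        exact mul_mem px py
      · intro x hx px
        exact inv_mem px
    intro x
    obtain ⟨g0, hg0⟩ := x
    exact hmem g0 hg0
  set ψ : FreeGroup ι →* FreeGroup (Fin n) ⧸ Subgroup.normalClosure rels :=
    θ.toMonoidHom.comp π' with hψdef
  have hψsurj : Function.Surjective ψ := θ.surjective.comp hπ'surj
  obtain ⟨T, hTfin, hT⟩ := ker_eq_normalClosure_of_fp hrels ψ hψsurj
  have hkerπe : (π.comp e).ker = Subgroup.normalClosure T := by
    rw [← hT]
    ext x
    simp only [MonoidHom.mem_ker, MonoidHom.comp_apply]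
    constructor
    · intro hx
      have hx' : π' x = 1 := by
        apply Subtype.ext
        rw [hπ'e x]
        simpa using hx
      show θ (π' x) = 1
      rw [hx', map_one]
    · intro hx
      have hx' : π' x = 1 := θ.injective (by rw [map_one]; exact hx)
      rw [← hπ'e x, hx']
      rfl
  -- decomposition of elements of the normal closure of R
  set Tf : Finset (FreeGroup ι) := hTfin.toFinset with hTfdef
  set P : FreeGroup α → Prop :=
    fun y => ∃ c a, a ∈ R ∧ (y = c * a * c⁻¹ ∨ y = c * a⁻¹ * c⁻¹) with hPdef
  have hmemP : ∀ y, y ∈ Group.conjugatesOfSet R ∪ (Group.conjugatesOfSet R)⁻¹ → P y := by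
    rintro y (hy | hy)
    · obtain ⟨a, haR, hconj⟩ := Group.mem_conjugatesOfSet_iff.1 hy
      obtain ⟨c, hc⟩ := isConj_iff.1 hconj
      exact ⟨c, a, haR, Or.inl hc.symm⟩
    · rw [Set.mem_inv] at hy
      obtain ⟨a, haR, hconj⟩ := Group.mem_conjugatesOfSet_iff.1 hy
      obtain ⟨c, hc⟩ := isConj_iff.1 hconj
      refine ⟨c, a, haR, Or.inr ?_⟩
      rw [← inv_inv y, ← hc]
      group
  have hdec : ∀ t : FreeGroup ι, ∃ l : List (FreeGroup α),
      t ∈ Tf → (∀ y ∈ l, P y) ∧ l.prod = e t := by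
    intro t
    by_cases ht : t ∈ Tf
    · have h0 : t ∈ (π.comp e).ker := by
        rw [hkerπe]
        exact Subgroup.subset_normalClosure (hTfin.mem_toFinset.1 ht)
      have h1 : e t ∈ Subgroup.normalClosure R := by
        rw [← QuotientGroup.ker_mk' (Subgroup.normalClosure R), MonoidHom.mem_ker]
        exact h0
      have h2 : e t ∈ Submonoid.closure
          (Group.conjugatesOfSet R ∪ (Group.conjugatesOfSet R)⁻¹) := by
        rw [← Subgroup.closure_toSubmonoid]
        exact h1
      obtain ⟨l, hl1, hl2⟩ := Submonoid.exists_list_of_mem_closure h2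
      exact ⟨l, fun _ => ⟨fun y hy => hmemP y (hl1 y hy), hl2⟩⟩
    · exact ⟨[], fun hc => absurd hc ht⟩
  choose L hL using hdec
  have hPw : ∀ y : FreeGroup α, ∃ ca : FreeGroup α × FreeGroup α,
      P y → ca.2 ∈ R ∧ (y = ca.1 * ca.2 * ca.1⁻¹ ∨ y = ca.1 * ca.2⁻¹ * ca.1⁻¹) := by
    intro y
    by_cases hy : P y
    · obtain ⟨c, a, h1, h2⟩ := hy
      exact ⟨(c, a), fun _ => ⟨h1, h2⟩⟩
    · exact ⟨(1, 1), fun hc => absurd hc hy⟩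
  choose D hD using hPw
  set A₀ : Finset α := S.biUnion (fun s => FreeGroup.supp s) ∪
    Tf.biUnion (fun t => (L t).toFinset.biUnion
      (fun y => FreeGroup.supp (D y).1 ∪ FreeGroup.supp (D y).2)) with hA₀def
  set mval : FreeGroup {a : α // a ∈ A₀} →* FreeGroup α :=
    FreeGroup.map Subtype.val with hmvaldef
  have hmvalinj : Function.Injective mval := freeGroup_map_injective Subtype.val_injective
  have hliftex : ∀ w : FreeGroup α, ∃ w' : FreeGroup {a : α // a ∈ A₀},
      w ∈ mval.range → mval w' = w := by
    intro w
    by_cases hw : w ∈ mval.range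
    · obtain ⟨w', hw'⟩ := hw
      exact ⟨w', fun _ => hw'⟩
    · exact ⟨1, fun hc => absurd hc hw⟩
  choose lft hlft using hliftex
  have hSsupp : ∀ s ∈ S, FreeGroup.supp s ⊆ A₀ := by
    intro s hs a ha
    exact Finset.mem_union_left _ (Finset.mem_biUnion.2 ⟨s, hs, ha⟩)
  have hSlift : ∀ s ∈ S, mval (lft s) = s := fun s hs =>
    hlft s (mem_range_map_val_of_supp_subset (hSsupp s hs))
  have hysupp : ∀ t ∈ Tf, ∀ y ∈ L t,
      FreeGroup.supp (D y).1 ⊆ A₀ ∧ FreeGroup.supp (D y).2 ⊆ A₀ := by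
    intro t ht y hy
    constructor <;> intro a ha <;>
      exact Finset.mem_union_right _ (Finset.mem_biUnion.2 ⟨t, ht,
        Finset.mem_biUnion.2 ⟨y, List.mem_toFinset.2 hy,
          by first
            | exact Finset.mem_union_left _ ha
            | exact Finset.mem_union_right _ ha⟩⟩)
  set R₀ : Finset (FreeGroup {a : α // a ∈ A₀}) :=
    Tf.biUnion (fun t => (L t).toFinset.image (fun y => lft (D y).2)) with hR₀def
  set S₀ : Finset (FreeGroup {a : α // a ∈ A₀}) := S.image lft with hS₀def
  have hR₀img : ∀ r' ∈ R₀, mval r' ∈ R := by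
    intro r' hr'
    rw [hR₀def, Finset.mem_biUnion] at hr'
    obtain ⟨t, ht, hr'⟩ := hr'
    rw [Finset.mem_image] at hr'
    obtain ⟨y, hy, rfl⟩ := hr'
    have hy' := List.mem_toFinset.1 hy
    have hPy := (hL t ht).1 y hy'
    have ha' : mval (lft (D y).2) = (D y).2 :=
      hlft _ (mem_range_map_val_of_supp_subset (hysupp t ht y hy').2)
    rw [ha']
    exact (hD y hPy).1
  refine ⟨A₀, R₀, S₀, ?_, ?_, ?_⟩
  · rintro x ⟨r', hr', rfl⟩
    exact hR₀img r' hr'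
  · ext x
    constructor
    · rintro ⟨w, hw, rfl⟩
      rw [Finset.mem_coe, hS₀def, Finset.mem_image] at hw
      obtain ⟨s, hs, rfl⟩ := hw
      rw [show FreeGroup.map Subtype.val (lft s) = mval (lft s) from rfl, hSlift s hs]
      exact hs
    · intro hx
      exact ⟨lft x, Finset.mem_coe.2 (hS₀def ▸ Finset.mem_image_of_mem _ hx), hSlift x hx⟩
  · have hkerR₀ : Subgroup.normalClosure ((R₀ : Set (FreeGroup {a : α // a ∈ A₀})))
        ≤ (π.comp mval).ker := by
      apply Subgroup.normalClosure_le_normal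
      intro r' hr'
      rw [SetLike.mem_coe, MonoidHom.mem_ker, MonoidHom.comp_apply]
      exact (QuotientGroup.eq_one_iff _).2
        (Subgroup.subset_normalClosure (hR₀img r' (Finset.mem_coe.1 hr')))
    refine ⟨QuotientGroup.lift _ (π.comp mval) hkerR₀, fun w => rfl, ?_⟩
    set ℓ : FreeGroup ι →* FreeGroup {a : α // a ∈ A₀} :=
      FreeGroup.lift (fun s : ι => lft s.1) with hℓdef
    have hmℓ : ∀ x, mval (ℓ x) = e x := by
      have heq : mval.comp ℓ = e :=
        FreeGroup.ext_hom _ _ (fun s => by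
          simp [hℓdef, hedef, FreeGroup.lift_apply_of, hSlift s.1 s.2])
      intro x
      exact DFunLike.congr_fun heq x
    set ρ : FreeGroup ι →* FreeGroup {a : α // a ∈ A₀} ⧸
        Subgroup.normalClosure ((R₀ : Set (FreeGroup {a : α // a ∈ A₀}))) :=
      (presMk ((R₀ : Set (FreeGroup {a : α // a ∈ A₀})))).comp ℓ with hρdef
    have hcomm : ∀ x, QuotientGroup.lift _ (π.comp mval) hkerR₀ (ρ x) = π (e x) := by
      intro x
      rw [← hmℓ x]
      rfl
    have hkerle : (π.comp e).ker ≤ ρ.ker := by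
      rw [hkerπe]
      apply Subgroup.normalClosure_le_normal
      intro t ht
      have htf : t ∈ Tf := hTfin.mem_toFinset.2 ht
      have hmem : e t ∈ Subgroup.map mval
          (Subgroup.normalClosure ((R₀ : Set (FreeGroup {a : α // a ∈ A₀})))) := by
        rw [← (hL t htf).2]
        apply Subgroup.list_prod_mem
        intro y hy
        have hPy := (hL t htf).1 y hy
        obtain ⟨haR, hcase⟩ := hD y hPy
        obtain ⟨hc1, hc2⟩ := hysupp t htf y hy
        obtain ⟨c', hc'⟩ := mem_range_map_val_of_supp_subset hc1
        have ha' : mval (lft (D y).2) = (D y).2 :=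
          hlft _ (mem_range_map_val_of_supp_subset hc2)
        have hr₀ : lft (D y).2 ∈ R₀ := by
          rw [hR₀def]
          exact Finset.mem_biUnion.2 ⟨t, htf,
            Finset.mem_image.2 ⟨y, List.mem_toFinset.2 hy, rfl⟩⟩
        have hrnc : (lft (D y).2) ∈
            Subgroup.normalClosure ((R₀ : Set (FreeGroup {a : α // a ∈ A₀}))) :=
          Subgroup.subset_normalClosure (Finset.mem_coe.2 hr₀)
        rcases hcase with hcc | hcc
        · exact Subgroup.mem_map.2 ⟨c' * lft (D y).2 * c'⁻¹,
            Subgroup.normalClosure_normal.conj_mem _ hrnc c',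
            by rw [map_mul, map_mul, map_inv, hc', ha', ← hcc]⟩
        · exact Subgroup.mem_map.2 ⟨c' * (lft (D y).2)⁻¹ * c'⁻¹,
            Subgroup.normalClosure_normal.conj_mem _
              ((Subgroup.normalClosure _).inv_mem hrnc) c',
            by rw [map_mul, map_mul, map_inv, map_inv, hc', ha', ← hcc]⟩
      obtain ⟨u, hu, hu'⟩ := Subgroup.mem_map.1 hmem
      have huℓ : u = ℓ t := hmvalinj (by rw [hu', hmℓ])
      rw [SetLike.mem_coe, MonoidHom.mem_ker, hρdef, MonoidHom.comp_apply]
      exact (QuotientGroup.eq_one_iff _).2 (huℓ ▸ hu)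
    have hrange : (Subgroup.closure
        (presMk ((R₀ : Set (FreeGroup {a : α // a ∈ A₀}))) ''
          (S₀ : Set (FreeGroup {a : α // a ∈ A₀})))) ≤ ρ.range := by
      rw [Subgroup.closure_le]
      rintro x ⟨w, hw, rfl⟩
      rw [Finset.mem_coe, hS₀def, Finset.mem_image] at hw
      obtain ⟨s, hs, rfl⟩ := hw
      exact ⟨FreeGroup.of (⟨s, hs⟩ : ι), by
        rw [hρdef, MonoidHom.comp_apply, hℓdef]
        simp [FreeGroup.lift_apply_of]⟩
    intro x hx y hy hxy
    obtain ⟨a, rfl⟩ := hrange hx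
    obtain ⟨b, rfl⟩ := hrange hy
    have h1 : π (e a) = π (e b) := by rw [← hcomm a, ← hcomm b, hxy]
    have h2 : a * b⁻¹ ∈ (π.comp e).ker := by
      rw [MonoidHom.mem_ker, map_mul, map_inv]
      simp only [MonoidHom.comp_apply]
      rw [h1]
      simp
    have h3 := hkerle h2
    rw [MonoidHom.mem_ker, map_mul, map_inv, mul_inv_eq_one] at h3
    rw [h3]
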